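/- (Lemma 3, interference-free case) Let M ≥ 2 and N ≥ 2 be integers. Define a localization schedule for K targets with N time slots to be a family b_{k,m,n} ∈ {0,1} (k ∈ {1,…,K}, m ∈ {1,…,M}, n ∈ {1,…,N}) satisfying: (i) Σ_{k} b_{k,m,n} ≤ 1 for every m, n; (ii) Σ_{m} b_{k,m,n} ≤ 1 for every k, n; (iii) Σ_{n} b_{k,m,n} ≤ 1 for every k, m; and (iv) Σ_{m,n} b_{k,m,n} ≥ 2 for every k. Then the largest K for which such a schedule exists equals ⌊MN/2⌋. -/

import Mathlib

open Finset

/-- A localization schedule: `b k m n = 1` iff BS `m` measures target `k` in slot `n`;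
each BS senses at most one target per slot, each target reflects to at most one BS per
slot, each (target, BS) pair is used in at most one slot, and each target obtains at
least two measurements. -/
def IsSchedule (K M N : ℕ) (b : Fin K → Fin M → Fin N → ℕ) : Prop :=
  (∀ k m n, b k m n ≤ 1) ∧
  (∀ m n, ∑ k, b k m n ≤ 1) ∧
  (∀ k n, ∑ m, b k m n ≤ 1) ∧
  (∀ k m, ∑ n, b k m n ≤ 1) ∧
  (∀ k, 2 ≤ ∑ m, ∑ n, b k m n)

/-- Row of the `j`-th cell in the diagonal ordering of the `M × N` grid. -/
def lrow (M N j : ℕ) : ℕ := (j / N + j % N % 2) % M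

/-- Column of the `j`-th cell in the diagonal ordering of the `M × N` grid. -/
def lcol (N j : ℕ) : ℕ := j % N

lemma mod_succ_ne {M : ℕ} (hM : 2 ≤ M) (q : ℕ) : q % M ≠ (q + 1) % M := by
  intro h
  have h0 : q + 0 ≡ q + 1 [MOD M] := by show (q + 0) % M = (q + 1) % M; rw [add_zero]; exact h
  have h1 : (0 : ℕ) ≡ 1 [MOD M] := Nat.ModEq.add_left_cancel' q h0
  have h2 : (0 : ℕ) % M = 1 % M := h1
  rw [Nat.zero_mod, Nat.mod_eq_of_lt (by omega)] at h2
  omega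

lemma lrow_lt {M N : ℕ} (hM : 0 < M) (j : ℕ) : lrow M N j < M := Nat.mod_lt _ hM

lemma lcol_lt {N : ℕ} (hN : 0 < N) (j : ℕ) : lcol N j < N := Nat.mod_lt _ hN

lemma cell_inj {M N : ℕ} (hM : 2 ≤ M) (hN : 2 ≤ N) {j1 j2 : ℕ}
    (h1 : j1 < M * N) (h2 : j2 < M * N)
    (hr : lrow M N j1 = lrow M N j2) (hc : lcol N j1 = lcol N j2) : j1 = j2 := by
  unfold lrow at hr
  unfold lcol at hc
  rw [hc] at hr
  have hmj : j1 / N ≡ j2 / N [MOD M] := Nat.ModEq.add_right_cancel' _ hr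
  have d1 : j1 / N < M := (Nat.div_lt_iff_lt_mul (by omega)).2 h1
  have d2 : j2 / N < M := (Nat.div_lt_iff_lt_mul (by omega)).2 h2
  have q1 : j1 / N = j2 / N := by
    have h3 : j1 / N % M = j2 / N % M := hmj
    rwa [Nat.mod_eq_of_lt d1, Nat.mod_eq_of_lt d2] at h3
  calc j1 = N * (j1 / N) + j1 % N := (Nat.div_add_mod j1 N).symm
    _ = N * (j2 / N) + j2 % N := by rw [q1, hc]
    _ = j2 := Nat.div_add_mod j2 N

lemma cell_diff {M N : ℕ} (hM : 2 ≤ M) (hN : 2 ≤ N) (k : ℕ) :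
    lrow M N (2 * k) ≠ lrow M N (2 * k + 1) ∧ lcol N (2 * k) ≠ lcol N (2 * k + 1) := by
  set r := 2 * k % N with hr
  set q := 2 * k / N with hq
  have hrN : r < N := Nat.mod_lt _ (by omega)
  have hj : 2 * k = N * q + r := (Nat.div_add_mod (2 * k) N).symm
  rcases lt_or_ge (r + 1) N with hA | hB
  · -- no wrap
    have hm1 : (2 * k + 1) % N = r + 1 := by
      have e : 2 * k + 1 = N * q + (r + 1) := by rw [hj, add_assoc]
      rw [e, Nat.mul_add_mod, Nat.mod_eq_of_lt hA]
    have hd1 : (2 * k + 1) / N = q := by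
      have e : 2 * k + 1 = N * q + (r + 1) := by rw [hj, add_assoc]
      rw [e, Nat.mul_add_div (by omega), Nat.div_eq_of_lt hA, add_zero]
    constructor
    · unfold lrow
      rw [hm1, ← hr, ← hq, hd1]
      rcases Nat.even_or_odd r with ⟨t, ht⟩ | ⟨t, ht⟩
      · have e0 : r % 2 = 0 := by omega
        have e1 : (r + 1) % 2 = 1 := by omega
        rw [e0, e1, add_zero]
        exact mod_succ_ne hM q
      · have e0 : r % 2 = 1 := by omega
        have e1 : (r + 1) % 2 = 0 := by omega
        rw [e0, e1, add_zero]
        exact (mod_succ_ne hM q).symm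
    · unfold lcol
      rw [hm1, ← hr]
      omega
  · -- wrap: r + 1 = N
    have hB' : r + 1 = N := by omega
    have key : 2 * k + 1 = N * (q + 1) := by
      rw [hj, mul_add, mul_one, add_assoc, hB']
    have hm1 : (2 * k + 1) % N = 0 := by rw [key, Nat.mul_mod_right]
    have hd1 : (2 * k + 1) / N = q + 1 := by
      rw [key, Nat.mul_div_cancel_left _ (show 0 < N by omega)]
    have hr2 : r % 2 = 0 := by
      rcases Nat.even_or_odd N with ⟨t, ht⟩ | ⟨t, ht⟩
      · obtain ⟨P, hP⟩ : ∃ P, 2 * k = 2 * P + r := ⟨t * q, by rw [hj, ht]; ring⟩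
        omega
      · omega
    constructor
    · unfold lrow
      rw [hm1, ← hr, ← hq, hd1, hr2, add_zero]
      have : (0 : ℕ) % 2 = 0 := rfl
      rw [this, add_zero]
      exact mod_succ_ne hM q
    · unfold lcol
      rw [hm1, ← hr]
      omega

lemma sum_ite_le_one {α : Type*} [Fintype α] (p : α → Prop) [DecidablePred p]
    (h : ∀ a b, p a → p b → a = b) :
    (∑ a : α, if p a then (1 : ℕ) else 0) ≤ 1 := by
  classical
  rw [Finset.sum_boole]
  simp only [Nat.cast_id]
  exact Finset.card_le_one.2 fun a ha b hb =>
    h a b (by simpa using ha) (by simpa using hb)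

/-- Lemma 3, interference-free case: with `M ≥ 2` base stations and `N ≥ 2` time slots,
the largest number `K` of targets that can be effectively localized equals `⌊MN/2⌋`. -/
theorem lemma3_max_targets_interference_free (M N : ℕ) (hM : 2 ≤ M) (hN : 2 ≤ N) :
    IsGreatest {K : ℕ | ∃ b : Fin K → Fin M → Fin N → ℕ, IsSchedule K M N b}
      (M * N / 2) := by
  constructor
  · -- membership: construct a schedule for K = M*N/2
    set K := M * N / 2 with hK
    have hbound : ∀ k : Fin K, 2 * (k : ℕ) + 1 < M * N := by
      intro k
      have := k.isLt
      omega
    refine ⟨fun k m n =>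
      if ((m : ℕ) = lrow M N (2 * k) ∧ (n : ℕ) = lcol N (2 * k)) ∨
         ((m : ℕ) = lrow M N (2 * k + 1) ∧ (n : ℕ) = lcol N (2 * k + 1)) then 1 else 0,
      ?_, ?_, ?_, ?_, ?_⟩
    · intro k m n
      dsimp only
      split <;> omega
    · -- each BS-slot cell used by at most one target
      intro m n
      refine sum_ite_le_one _ fun k1 k2 hp1 hp2 => ?_
      have b1 : 2 * (k1 : ℕ) < M * N := by have := hbound k1; omega
      have b1' : 2 * (k1 : ℕ) + 1 < M * N := hbound k1
      have b2 : 2 * (k2 : ℕ) < M * N := by have := hbound k2; omega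
      have b2' : 2 * (k2 : ℕ) + 1 < M * N := hbound k2
      have : (k1 : ℕ) = (k2 : ℕ) := by
        rcases hp1 with ⟨e1, e2⟩ | ⟨e1, e2⟩ <;> rcases hp2 with ⟨e3, e4⟩ | ⟨e3, e4⟩
        · have := cell_inj hM hN b1 b2 (e1.symm.trans e3) (e2.symm.trans e4); omega
        · have := cell_inj hM hN b1 b2' (e1.symm.trans e3) (e2.symm.trans e4); omega
        · have := cell_inj hM hN b1' b2 (e1.symm.trans e3) (e2.symm.trans e4); omega
        · have := cell_inj hM hN b1' b2' (e1.symm.trans e3) (e2.symm.trans e4); omega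
      exact Fin.ext this
    · -- each target uses at most one BS per slot
      intro k n
      refine sum_ite_le_one _ fun m1 m2 hp1 hp2 => ?_
      have hd := (cell_diff hM hN (k : ℕ)).2
      have : (m1 : ℕ) = (m2 : ℕ) := by
        rcases hp1 with ⟨e1, e2⟩ | ⟨e1, e2⟩ <;> rcases hp2 with ⟨e3, e4⟩ | ⟨e3, e4⟩
        · rw [e1, e3]
        · exact absurd (e2.symm.trans e4) hd
        · exact absurd (e4.symm.trans e2) hd
        · rw [e1, e3]
      exact Fin.ext this
    · -- each (target, BS) pair used in at most one slot
      intro k m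
      refine sum_ite_le_one _ fun n1 n2 hp1 hp2 => ?_
      have hd := (cell_diff hM hN (k : ℕ)).1
      have : (n1 : ℕ) = (n2 : ℕ) := by
        rcases hp1 with ⟨e1, e2⟩ | ⟨e1, e2⟩ <;> rcases hp2 with ⟨e3, e4⟩ | ⟨e3, e4⟩
        · rw [e2, e4]
        · exact absurd (e1.symm.trans e3) hd
        · exact absurd (e3.symm.trans e1) hd
        · rw [e2, e4]
      exact Fin.ext this
    · -- each target gets two measurements
      intro k
      have hd := cell_diff hM hN (k : ℕ)
      set m1 : Fin M := ⟨lrow M N (2 * k), lrow_lt (by omega) _⟩ with hm1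
      set n1 : Fin N := ⟨lcol N (2 * k), lcol_lt (by omega) _⟩ with hn1
      set m2 : Fin M := ⟨lrow M N (2 * k + 1), lrow_lt (by omega) _⟩ with hm2
      set n2 : Fin N := ⟨lcol N (2 * k + 1), lcol_lt (by omega) _⟩ with hn2
      have hne : (m1, n1) ≠ (m2, n2) := by
        intro h
        exact hd.1 (congrArg (fun p => (p.1 : ℕ)) h)
      dsimp only
      rw [← Fintype.sum_prod_type']
      calc (2 : ℕ) = ∑ p ∈ ({(m1, n1), (m2, n2)} : Finset (Fin M × Fin N)),
            (if ((p.1 : ℕ) = lrow M N (2 * k) ∧ (p.2 : ℕ) = lcol N (2 * k)) ∨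
               ((p.1 : ℕ) = lrow M N (2 * k + 1) ∧ (p.2 : ℕ) = lcol N (2 * k + 1))
             then 1 else 0) := by
            rw [Finset.sum_pair hne]
            rw [if_pos (Or.inl ⟨rfl, rfl⟩), if_pos (Or.inr ⟨rfl, rfl⟩)]
        _ ≤ ∑ p : Fin M × Fin N,
            (if ((p.1 : ℕ) = lrow M N (2 * k) ∧ (p.2 : ℕ) = lcol N (2 * k)) ∨
               ((p.1 : ℕ) = lrow M N (2 * k + 1) ∧ (p.2 : ℕ) = lcol N (2 * k + 1))
             then 1 else 0) := by
            exact Finset.sum_le_sum_of_subset (Finset.subset_univ _)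
  · -- upper bound
    rintro K ⟨b, hb1, hb2, hb3, hb4, hb5⟩
    have key : 2 * K ≤ M * N := by
      calc 2 * K = ∑ _k : Fin K, 2 := by simp [mul_comm]
        _ ≤ ∑ k : Fin K, ∑ m, ∑ n, b k m n := Finset.sum_le_sum fun k _ => hb5 k
        _ = ∑ m, ∑ k : Fin K, ∑ n, b k m n := Finset.sum_comm
        _ = ∑ m, ∑ n, ∑ k : Fin K, b k m n := by
            exact Finset.sum_congr rfl fun m _ => Finset.sum_comm
        _ ≤ ∑ _m : Fin M, ∑ _n : Fin N, 1 :=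
            Finset.sum_le_sum fun m _ => Finset.sum_le_sum fun n _ => hb2 m n
        _ = M * N := by simp [mul_comm]
    omega
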